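/- Let G be a finite group acting linearly on a finite-dimensional real inner product space V with a G-invariant inner product, let V_fixed = {v ∈ V : g·v = v for all g ∈ G}, and let e_1,…,e_s be a basis of V_fixed. Let k ≥ 1 and let H be a subgroup of S_k whose action on {1,…,k} is transitive. Suppose T_1,…,T_h is a basis of the real vector space of H-equivariant linear maps ℝ^k → ℝ^k, with T_h equal to the identity map. Then a linear map L : V^k → V^k is equivariant under both the componentwise G^k-action and the coordinate-permutation action of H if and only if there exist a G-equivariant linear map L̂ : V → V and real numbers a_{ijℓ} (1 ≤ i, j ≤ s, 1 ≤ ℓ ≤ h − 1) such that for every (v_1,…,v_k) ∈ V^k and every coordinate m, L(v_1,…,v_k)_m = L̂(v_m) + Σ_{ℓ=1}^{h−1} Σ_{i,j=1}^s a_{ijℓ} · (T_ℓ(⟨v_1, e_i⟩, …, ⟨v_k, e_i⟩))_m · e_j. -/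

import Mathlib

open scoped RealInnerProductSpace

namespace WreathH


lemma exists_dual {V : Type*} [NormedAddCommGroup V] [InnerProductSpace ℝ V]
    [FiniteDimensional ℝ V] {F : Submodule ℝ V} {s : ℕ} {e : Fin s → V}
    (he_indep : LinearIndependent ℝ e)
    (he_span : Submodule.span ℝ (Set.range e) = F) :
    ∃ u : Fin s → V, ∀ w ∈ F, w = ∑ i, ⟪w, e i⟫ • u i := by
  have he_mem : ∀ i, e i ∈ F := fun i => he_span ▸ Submodule.subset_span (Set.mem_range_self i)
  set e' : Fin s → F := fun i => ⟨e i, he_mem i⟩ with he'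
  have hcomp : (⇑F.subtype ∘ e') = e := rfl
  have he'_indep : LinearIndependent ℝ e' :=
    LinearIndependent.of_comp F.subtype (by rw [hcomp]; exact he_indep)
  have hspan' : ⊤ ≤ Submodule.span ℝ (Set.range e') := by
    have hmap : Submodule.map F.subtype (Submodule.span ℝ (Set.range e'))
        = Submodule.map F.subtype ⊤ := by
      rw [Submodule.map_span, Submodule.map_subtype_top, ← Set.range_comp, hcomp, he_span]
    exact le_of_eq ((Submodule.map_injective_of_injective F.injective_subtype hmap).symm)
  let bas : Module.Basis (Fin s) ℝ F := Module.Basis.mk he'_indep hspan'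
  let Φ : F →ₗ[ℝ] (Fin s → ℝ) :=
    { toFun := fun w i => ⟪(w : V), e i⟫
      map_add' := fun x y => by funext i; simp [inner_add_left]
      map_smul' := fun r x => by funext i; simp [real_inner_smul_left] }
  have hΦinj : Function.Injective Φ := by
    rw [← LinearMap.ker_eq_bot]
    rw [LinearMap.ker_eq_bot']
    intro w hw
    have hzero : ∀ i, ⟪(w : V), e i⟫ = 0 := fun i => congrFun hw i
    have hkey : ∀ x ∈ Submodule.span ℝ (Set.range e), ⟪x, (w : V)⟫ = 0 := by
      intro x hx
      induction hx using Submodule.span_induction with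
      | mem x hx => obtain ⟨i, rfl⟩ := hx; rw [real_inner_comm]; exact hzero i
      | zero => simp
      | add x y _ _ hx hy => rw [inner_add_left, hx, hy, add_zero]
      | smul r x _ hx => rw [real_inner_smul_left, hx, mul_zero]
    have hww : ⟪(w : V), (w : V)⟫ = 0 := hkey _ (by rw [he_span]; exact w.2)
    exact Subtype.ext (inner_self_eq_zero.1 hww)
  have hΦsurj : Function.Surjective Φ :=
    (LinearMap.injective_iff_surjective_of_finrank_eq_finrank
      (by rw [Module.finrank_eq_card_basis bas, Module.finrank_fin_fun, Fintype.card_fin])).1 hΦinj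
  choose uf huf using fun i => hΦsurj (Pi.single i 1)
  refine ⟨fun i => (uf i : V), ?_⟩
  intro w hw
  have key : (⟨w, hw⟩ : F) = ∑ i, ⟪w, e i⟫ • uf i := by
    apply hΦinj
    rw [map_sum]
    funext j
    have hone : ∀ i, Φ (⟪w, e i⟫ • uf i) = ⟪w, e i⟫ • (Pi.single i 1 : Fin s → ℝ) := by
      intro i; rw [map_smul, huf i]
    simp only [hone]
    simp [Finset.sum_apply, Pi.single_apply, Φ]
  have := congrArg (Submodule.subtype F) key
  simpa using this

lemma exists_avg {G V : Type*} [Group G] [Finite G] [NormedAddCommGroup V]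
    [InnerProductSpace ℝ V] (ρ : Representation ℝ G V)
    (hinner : ∀ (g : G) (u v : V), ⟪ρ g u, ρ g v⟫ = ⟪u, v⟫) :
    ∃ P : V →ₗ[ℝ] V,
      (∀ (g : G) (v : V), ρ g (P v) = P v) ∧
      (∀ v : V, (∀ g : G, ρ g v = v) → P v = v) ∧
      (∀ v w : V, ⟪P v, w⟫ = ⟪v, P w⟫) ∧
      (∀ (B : V →ₗ[ℝ] V), (∀ (g : G) (w : V), B (ρ g w) = B w) → ∀ w, B (P w) = B w) := by
  have : Fintype G := Fintype.ofFinite G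
  have hcard : (Fintype.card G : ℝ) ≠ 0 := Nat.cast_ne_zero.2 Fintype.card_ne_zero
  refine ⟨(Fintype.card G : ℝ)⁻¹ • ∑ g : G, (ρ g : V →ₗ[ℝ] V), ?_, ?_, ?_, ?_⟩
  · intro g v
    simp only [LinearMap.smul_apply, LinearMap.sum_apply, map_smul, map_sum]
    congr 1
    calc ∑ g' : G, ρ g (ρ g' v) = ∑ g' : G, ρ (g * g') v := by
          refine Finset.sum_congr rfl fun g' _ => ?_
          rw [map_mul]; rfl
      _ = ∑ g' : G, ρ g' v := Equiv.sum_comp (Equiv.mulLeft g) (fun g' => ρ g' v)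
  · intro v hv
    simp only [LinearMap.smul_apply, LinearMap.sum_apply, hv]
    rw [Finset.sum_const, Finset.card_univ, ← Nat.cast_smul_eq_nsmul ℝ, smul_smul,
      inv_mul_cancel₀ hcard, one_smul]
  · intro v w
    simp only [LinearMap.smul_apply, LinearMap.sum_apply]
    rw [real_inner_smul_left, real_inner_smul_right, sum_inner, inner_sum]
    congr 1
    calc ∑ g : G, ⟪ρ g v, w⟫ = ∑ g : G, ⟪v, ρ g⁻¹ w⟫ := by
          refine Finset.sum_congr rfl fun g _ => ?_
          have hgw : ρ g (ρ g⁻¹ w) = w := by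
            rw [← Module.End.mul_apply, ← map_mul, mul_inv_cancel, map_one, Module.End.one_apply]
          calc ⟪ρ g v, w⟫ = ⟪ρ g v, ρ g (ρ g⁻¹ w)⟫ := by rw [hgw]
            _ = ⟪v, ρ g⁻¹ w⟫ := hinner g v _
      _ = ∑ g : G, ⟪v, ρ g w⟫ := Equiv.sum_comp (Equiv.inv G) (fun g => ⟪v, ρ g w⟫)
  · intro B hB w
    simp only [LinearMap.smul_apply, LinearMap.sum_apply, map_smul, map_sum, hB]
    rw [Finset.sum_const, Finset.card_univ, ← Nat.cast_smul_eq_nsmul ℝ, smul_smul,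
      inv_mul_cancel₀ hcard, one_smul]



/-- The space of `H`-equivariant linear endomorphisms of `ℝᵏ`, for a subgroup
`H ≤ S_k` acting by permuting coordinates. -/
noncomputable def HEquivMaps (k : ℕ) (H : Subgroup (Equiv.Perm (Fin k))) :
    Submodule ℝ ((Fin k → ℝ) →ₗ[ℝ] (Fin k → ℝ)) where
  carrier := {T | ∀ τ ∈ H, ∀ x : Fin k → ℝ,
    T (fun i => x (τ⁻¹ i)) = fun i => T x (τ⁻¹ i)}
  zero_mem' := by
    intro τ hτ x
    funext m; simp
  add_mem' := by
    intro T T' hT hT' τ hτ x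
    funext m
    simp only [LinearMap.add_apply, Pi.add_apply, hT τ hτ x, hT' τ hτ x]
  smul_mem' := by
    intro c T hT τ hτ x
    funext m
    simp only [LinearMap.smul_apply, Pi.smul_apply, hT τ hτ x]

/-- Characterization of `(G ≀ H)`-equivariant linear layers on
`Vᵏ`, for a transitive subgroup `H ≤ S_k`: `L` is equivariant for the
componentwise `Gᵏ`-action and the `H` coordinate-permutation action iff it is a
Siamese map plus a combination of the `(h−1)·s²` non-Siamese maps built from a
basis `e₁, …, e_s` of the fixed space and a basis `T₁, …, T_h` (with `T_h = id`)
of the `H`-equivariant endomorphisms of `ℝᵏ`. -/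
theorem wreath_H_equivariant_characterization
    {G V : Type*} [Group G] [Finite G]
    [NormedAddCommGroup V] [InnerProductSpace ℝ V] [FiniteDimensional ℝ V]
    (ρ : Representation ℝ G V)
    (hinner : ∀ (g : G) (u v : V), ⟪ρ g u, ρ g v⟫ = ⟪u, v⟫)
    (s : ℕ) (e : Fin s → V)
    (he_indep : LinearIndependent ℝ e)
    (he_span : Submodule.span ℝ (Set.range e) = ρ.invariants)
    (k : ℕ) (hk : 1 ≤ k)
    (H : Subgroup (Equiv.Perm (Fin k)))
    (htrans : ∀ i j : Fin k, ∃ τ ∈ H, τ i = j)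
    (h : ℕ) (hh : 1 ≤ h)
    (T : Fin h → ((Fin k → ℝ) →ₗ[ℝ] (Fin k → ℝ)))
    (hT_indep : LinearIndependent ℝ T)
    (hT_span : Submodule.span ℝ (Set.range T) = HEquivMaps k H)
    (hT_last : T ⟨h - 1, by omega⟩ = LinearMap.id)
    (L : (Fin k → V) →ₗ[ℝ] (Fin k → V)) :
    ((∀ (g : Fin k → G) (v : Fin k → V),
        L (fun i => ρ (g i) (v i)) = fun i => ρ (g i) (L v i)) ∧
     (∀ τ : Equiv.Perm (Fin k), τ ∈ H → ∀ v : Fin k → V,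
        L (fun i => v (τ⁻¹ i)) = fun i => L v (τ⁻¹ i))) ↔
    (∃ (Lhat : V →ₗ[ℝ] V) (a : Fin h → Fin s → Fin s → ℝ),
      (∀ (g : G) (v : V), Lhat (ρ g v) = ρ g (Lhat v)) ∧
      ∀ (v : Fin k → V) (m : Fin k),
        L v m = Lhat (v m) +
          ∑ ℓ ∈ Finset.univ.filter (fun ℓ : Fin h => (ℓ : ℕ) < h - 1),
            ∑ i, ∑ j, a ℓ i j • ((T ℓ (fun p => ⟪v p, e i⟫)) m • e j)) := by
  have he_mem : ∀ i, e i ∈ ρ.invariants := fun i =>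
    he_span ▸ Submodule.subset_span (Set.mem_range_self i)
  have he_fix : ∀ (g : G) i, ρ g (e i) = e i := fun g i =>
    (Representation.mem_invariants ρ (e i)).1 (he_mem i) g
  have hinner_g : ∀ (g : G) (w : V) i, ⟪ρ g w, e i⟫ = ⟪w, e i⟫ := by
    intro g w i
    calc ⟪ρ g w, e i⟫ = ⟪ρ g w, ρ g (e i)⟫ := by rw [he_fix]
      _ = ⟪w, e i⟫ := hinner g w (e i)
  have hTmem : ∀ ℓ, ∀ τ ∈ H, ∀ x : Fin k → ℝ,
      T ℓ (fun i => x (τ⁻¹ i)) = fun i => T ℓ x (τ⁻¹ i) := by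
    intro ℓ
    have : T ℓ ∈ HEquivMaps k H := by
      rw [← hT_span]; exact Submodule.subset_span (Set.mem_range_self ℓ)
    exact this
  constructor
  · rintro ⟨hGeq, hHeq⟩
    obtain ⟨P, hgP, hPfix, hPadj, hPfactor⟩ := exists_avg ρ hinner
    have hPinv : ∀ v, P v ∈ ρ.invariants := fun v =>
      (Representation.mem_invariants ρ (P v)).2 (fun g => hgP g v)
    have hPe : ∀ i, P (e i) = e i := fun i => hPfix (e i) (fun g => he_fix g i)
    have hinner_P : ∀ (v : V) i, ⟪P v, e i⟫ = ⟪v, e i⟫ := fun v i => by rw [hPadj, hPe]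
    obtain ⟨u, hu⟩ := exists_dual he_indep he_span
    have hPu : ∀ v : V, P v = ∑ i, ⟪v, e i⟫ • u i := fun v =>
      (hu (P v) (hPinv v)).trans (Finset.sum_congr rfl fun i _ => by rw [hinner_P])
    obtain ⟨d, hd⟩ : ∃ d : ρ.invariants → (Fin s → ℝ),
        ∀ w : ρ.invariants, (w : V) = ∑ j, d w j • e j := by
      have h1 : ∀ w : ρ.invariants, ∃ cw : Fin s → ℝ, ∑ j, cw j • e j = (w : V) := fun w =>
        (Submodule.mem_span_range_iff_exists_fun ℝ).1 (by rw [he_span]; exact w.2)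
      choose d hd using h1
      exact ⟨d, fun w => (hd w).symm⟩
    set o : Fin k := ⟨0, hk⟩ with ho
    set B : Fin k → Fin k → (V →ₗ[ℝ] V) := fun m p =>
      (LinearMap.proj m).comp (L.comp (LinearMap.single ℝ (fun _ => V) p)) with hB
    have hB_apply : ∀ m p w, B m p w = L (Pi.single p w) m := by
      intro m p w
      rw [hB]
      simp [LinearMap.coe_single]
    have hL_sum : ∀ (v : Fin k → V) m, L v m = ∑ p, B m p (v p) := by
      intro v m
      conv_lhs => rw [← Finset.univ_sum_single v, map_sum]
      rw [Finset.sum_apply]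
      exact Finset.sum_congr rfl fun p _ => (hB_apply m p (v p)).symm
    have hact : ∀ (g : G) (p : Fin k) (w : V),
        L (Pi.single p (ρ g w)) = fun i => ρ (if i = p then g else 1) (L (Pi.single p w) i) := by
      intro g p w
      have harg : (fun i => ρ (if i = p then g else 1) ((Pi.single p w : Fin k → V) i))
          = Pi.single p (ρ g w) := by
        funext i
        by_cases hip : i = p
        · subst hip; simp
        · simp [Pi.single_eq_of_ne hip]
      rw [← harg]
      exact hGeq (fun i => if i = p then g else 1) (Pi.single p w)
    have hB1 : ∀ (g : G) p w, B p p (ρ g w) = ρ g (B p p w) := by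
      intro g p w
      have h1 := congrFun (hact g p w) p
      simpa [hB_apply] using h1
    have hB2 : ∀ (g : G) m p w, m ≠ p → B m p (ρ g w) = B m p w := by
      intro g m p w hmp
      have h1 := congrFun (hact g p w) m
      simpa [hB_apply, if_neg hmp] using h1
    have hB3 : ∀ (g : G) m p (w : V), m ≠ p → ρ g (B m p w) = B m p w := by
      intro g m p w hmp
      have harg : (fun i => ρ (if i = m then g else 1) ((Pi.single p w : Fin k → V) i))
          = Pi.single p w := by
        funext i
        by_cases him : i = m
        · subst him; simp [Pi.single_eq_of_ne hmp]
        · simp [if_neg him]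
      have h2 := hGeq (fun i => if i = m then g else 1) (Pi.single p w)
      rw [harg] at h2
      have h3 := congrFun h2 m
      rw [if_pos rfl] at h3
      rw [hB_apply, ← h3]
    have hBperm : ∀ τ ∈ H, ∀ m q, B m (τ q) = B (τ⁻¹ m) q := by
      intro τ hτ m q
      refine LinearMap.ext fun w => ?_
      have harg : (fun i => (Pi.single q w : Fin k → V) (τ⁻¹ i)) = Pi.single (τ q) w := by
        funext i
        by_cases hi : i = τ q
        · subst hi; rw [Equiv.Perm.inv_def, Equiv.symm_apply_apply]; simp
        · have hne : τ⁻¹ i ≠ q := fun hc => hi (by rw [← hc, Equiv.Perm.inv_def, Equiv.apply_symm_apply])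
          simp [Pi.single_eq_of_ne (show τ.symm i ≠ q from hne), Pi.single_eq_of_ne hi]
      have h2 := hHeq τ hτ (Pi.single q w)
      rw [harg] at h2
      have h3 := congrFun h2 m
      rw [hB_apply, hB_apply]
      exact h3
    have hBdiag : ∀ m, B m m = B o o := by
      intro m
      obtain ⟨τ, hτ, hτo⟩ := htrans o m
      have h1 := hBperm τ hτ m o
      rw [hτo] at h1
      have h2 : τ⁻¹ m = o := by rw [← hτo, Equiv.Perm.inv_def, Equiv.symm_apply_apply]
      rw [h2] at h1
      exact h1
    have hBinv : ∀ m p, m ≠ p → ∀ w, B m p w ∈ ρ.invariants := fun m p hmp w =>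
      (Representation.mem_invariants ρ _).2 fun g => hB3 g m p w hmp
    have hBPfix : ∀ m p (w : V), m ≠ p → B m p (P w) = B m p w := fun m p w hmp =>
      hPfactor (B m p) (fun g w' => hB2 g m p w' hmp) w
    set c : Fin s → Fin s → Fin k → Fin k → ℝ := fun i j m p =>
      if hmp : m = p then 0 else d ⟨B m p (u i), hBinv m p hmp (u i)⟩ j with hc
    have hc_diag : ∀ i j m, c i j m m = 0 := by
      intro i j m; rw [hc]; exact dif_pos rfl
    have hc_off : ∀ m p, m ≠ p → ∀ v, B m p v = ∑ i, ∑ j, (c i j m p * ⟪v, e i⟫) • e j := by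
      intro m p hmp v
      calc B m p v = B m p (P v) := (hBPfix m p v hmp).symm
        _ = B m p (∑ i, ⟪v, e i⟫ • u i) := by rw [hPu]
        _ = ∑ i, ⟪v, e i⟫ • B m p (u i) := by
            rw [map_sum]; exact Finset.sum_congr rfl fun i _ => map_smul _ _ _
        _ = ∑ i, ⟪v, e i⟫ • ∑ j, c i j m p • e j := by
            refine Finset.sum_congr rfl fun i _ => ?_
            congr 1
            have h4 : B m p (u i) = ∑ j, d ⟨B m p (u i), hBinv m p hmp (u i)⟩ j • e j :=
              hd ⟨B m p (u i), hBinv m p hmp (u i)⟩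
            rw [h4]
            refine Finset.sum_congr rfl fun j _ => ?_
            congr 1
            simp only [hc]
            rw [dif_neg hmp]
        _ = ∑ i, ∑ j, (c i j m p * ⟪v, e i⟫) • e j := by
            refine Finset.sum_congr rfl fun i _ => ?_
            rw [Finset.smul_sum]
            refine Finset.sum_congr rfl fun j _ => ?_
            rw [smul_smul, mul_comm]
    have hc_perm : ∀ τ ∈ H, ∀ i j m q, c i j (τ⁻¹ m) q = c i j m (τ q) := by
      intro τ hτ i j m q
      by_cases hmq : m = τ q
      · have h1 : τ⁻¹ m = q := by rw [hmq, Equiv.Perm.inv_def, Equiv.symm_apply_apply]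
        simp only [hc]
        rw [dif_pos h1, dif_pos hmq]
      · have h2 : τ⁻¹ m ≠ q := fun hc2 => hmq (by rw [← hc2, Equiv.Perm.inv_def, Equiv.apply_symm_apply])
        have hval : B (τ⁻¹ m) q (u i) = B m (τ q) (u i) := by rw [hBperm τ hτ m q]
        simp only [hc]
        rw [dif_neg h2, dif_neg hmq]
        exact congrArg (fun z : ρ.invariants => d z j) (Subtype.ext hval)
    set M : Fin s → Fin s → ((Fin k → ℝ) →ₗ[ℝ] (Fin k → ℝ)) := fun i j =>
      Matrix.mulVecLin (Matrix.of fun m p => c i j m p) with hM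
    have hM_apply : ∀ i j x m, M i j x m = ∑ p, c i j m p * x p := by
      intro i j x m
      simp [hM, Matrix.mulVecLin, Matrix.mulVec, dotProduct]
    have hM_mem : ∀ i j, M i j ∈ HEquivMaps k H := by
      intro i j
      show ∀ τ ∈ H, ∀ x : Fin k → ℝ,
        M i j (fun i' => x (τ⁻¹ i')) = fun i' => M i j x (τ⁻¹ i')
      intro τ hτ x
      funext m
      rw [hM_apply, hM_apply]
      rw [← Equiv.sum_comp τ (fun p => c i j m p * x (τ⁻¹ p))]
      refine Finset.sum_congr rfl fun q _ => ?_
      rw [← hc_perm τ hτ i j m q, Equiv.Perm.inv_def, Equiv.symm_apply_apply]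
    have hbex : ∀ i j, ∃ bf : Fin h → ℝ, ∑ ℓ, bf ℓ • T ℓ = M i j := fun i j =>
      (Submodule.mem_span_range_iff_exists_fun ℝ).1 (by rw [hT_span]; exact hM_mem i j)
    choose b hbspec using hbex
    have hMT : ∀ i j x m, M i j x m = ∑ ℓ, b i j ℓ * (T ℓ x) m := by
      intro i j x m
      rw [← hbspec i j]
      simp [LinearMap.sum_apply, LinearMap.smul_apply, Finset.sum_apply, smul_eq_mul]
    set lastIdx : Fin h := ⟨h - 1, by omega⟩ with hlastIdx
    have hT_lastIdx : T lastIdx = LinearMap.id := hT_last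
    set S : Fin s → Fin s → (V →ₗ[ℝ] V) := fun i j =>
      LinearMap.smulRight
        ({ toFun := fun v => ⟪v, e i⟫
           map_add' := fun x y => by simp [inner_add_left]
           map_smul' := fun r x => by simp [real_inner_smul_left] } : V →ₗ[ℝ] ℝ) (e j) with hS
    have hS_apply : ∀ i j (v : V), S i j v = ⟪v, e i⟫ • e j := by
      intro i j v; rw [hS]; rfl
    refine ⟨B o o + ∑ i, ∑ j, b i j lastIdx • S i j, fun ℓ i j => b i j ℓ, ?_, ?_⟩
    · intro g v
      simp only [LinearMap.add_apply, LinearMap.sum_apply, LinearMap.smul_apply, hS_apply]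
      rw [map_add]
      congr 1
      · exact hB1 g o v
      · rw [map_sum]
        refine Finset.sum_congr rfl fun i _ => ?_
        rw [map_sum]
        refine Finset.sum_congr rfl fun j _ => ?_
        rw [map_smul, map_smul, he_fix, hinner_g]
    · intro v m
      have step1 : L v m = ∑ p ∈ Finset.univ.erase m, B m p (v p) + B m m (v m) := by
        rw [hL_sum v m, ← Finset.sum_erase_add Finset.univ _ (Finset.mem_univ m)]
      have step2 : ∑ p ∈ Finset.univ.erase m, B m p (v p)
          = ∑ i, ∑ j, (∑ p, c i j m p * ⟪v p, e i⟫) • e j := by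
        have e1 : ∑ p ∈ Finset.univ.erase m, B m p (v p)
            = ∑ p ∈ Finset.univ.erase m, ∑ i, ∑ j, (c i j m p * ⟪v p, e i⟫) • e j :=
          Finset.sum_congr rfl fun p hp =>
            hc_off m p (Finset.ne_of_mem_erase hp).symm (v p)
        rw [e1, Finset.sum_comm]
        refine Finset.sum_congr rfl fun i _ => ?_
        rw [Finset.sum_comm]
        refine Finset.sum_congr rfl fun j _ => ?_
        rw [← Finset.sum_smul]
        congr 1
        exact Finset.sum_erase _ (by rw [hc_diag, zero_mul])
      have step3 : ∀ i j, (∑ p, c i j m p * ⟪v p, e i⟫)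
          = ∑ ℓ, b i j ℓ * (T ℓ (fun p => ⟪v p, e i⟫)) m := by
        intro i j
        rw [← hM_apply i j (fun p => ⟪v p, e i⟫) m, hMT]
      have e2 : ∑ i, ∑ j, (∑ p, c i j m p * ⟪v p, e i⟫) • e j
          = ∑ ℓ, ∑ i, ∑ j, (b i j ℓ * (T ℓ (fun p => ⟪v p, e i⟫)) m) • e j := by
        calc ∑ i, ∑ j, (∑ p, c i j m p * ⟪v p, e i⟫) • e j
            = ∑ i, ∑ j, ∑ ℓ, (b i j ℓ * (T ℓ (fun p => ⟪v p, e i⟫)) m) • e j := by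
              refine Finset.sum_congr rfl fun i _ => Finset.sum_congr rfl fun j _ => ?_
              rw [step3 i j, Finset.sum_smul]
          _ = ∑ i, ∑ ℓ, ∑ j, (b i j ℓ * (T ℓ (fun p => ⟪v p, e i⟫)) m) • e j :=
              Finset.sum_congr rfl fun i _ => Finset.sum_comm
          _ = ∑ ℓ, ∑ i, ∑ j, (b i j ℓ * (T ℓ (fun p => ⟪v p, e i⟫)) m) • e j :=
              Finset.sum_comm
      have hsplit := Finset.sum_filter_add_sum_filter_not Finset.univ
        (fun ℓ : Fin h => (ℓ : ℕ) < h - 1)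
        (fun ℓ => ∑ i, ∑ j, (b i j ℓ * (T ℓ (fun p => ⟪v p, e i⟫)) m) • e j)
      have hnotfilter : (Finset.univ.filter (fun ℓ : Fin h => ¬ (ℓ : ℕ) < h - 1))
          = {lastIdx} := by
        ext ℓ
        have h2 := ℓ.isLt
        simp only [Finset.mem_filter, Finset.mem_univ, true_and, Finset.mem_singleton,
          hlastIdx, Fin.ext_iff]
        omega
      have hsing : ∑ i, ∑ j, (b i j lastIdx * (T lastIdx (fun p => ⟪v p, e i⟫)) m) • e j
          = ∑ i, ∑ j, (b i j lastIdx * ⟪v m, e i⟫) • e j := by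
        simp only [hT_lastIdx, LinearMap.id_apply]
      have hLhat_vm : (B o o + ∑ i, ∑ j, b i j lastIdx • S i j) (v m)
          = B o o (v m) + ∑ i, ∑ j, (b i j lastIdx * ⟪v m, e i⟫) • e j := by
        simp [LinearMap.add_apply, LinearMap.sum_apply, LinearMap.smul_apply, hS_apply,
          smul_smul]
      have hfilter_eq : ∑ ℓ ∈ Finset.univ.filter (fun ℓ : Fin h => (ℓ : ℕ) < h - 1),
            ∑ i, ∑ j, (b i j ℓ * (T ℓ (fun p => ⟪v p, e i⟫)) m) • e j
          = ∑ ℓ ∈ Finset.univ.filter (fun ℓ : Fin h => (ℓ : ℕ) < h - 1),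
            ∑ i, ∑ j, b i j ℓ • ((T ℓ (fun p => ⟪v p, e i⟫)) m • e j) := by
        refine Finset.sum_congr rfl fun ℓ _ => Finset.sum_congr rfl fun i _ =>
          Finset.sum_congr rfl fun j _ => ?_
        rw [smul_smul]
      rw [step1, step2, hBdiag m, e2, ← hsplit, hnotfilter, Finset.sum_singleton,
        hsing, hLhat_vm, hfilter_eq]
      abel
  · rintro ⟨Lhat, a, hLg, hform⟩
    constructor
    · intro g v
      funext m
      rw [hform (fun i => ρ (g i) (v i)) m, hform v m, map_add]
      congr 1
      · exact hLg (g m) (v m)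
      · rw [map_sum]
        refine Finset.sum_congr rfl fun ℓ _ => ?_
        rw [map_sum]
        refine Finset.sum_congr rfl fun i _ => ?_
        rw [map_sum]
        refine Finset.sum_congr rfl fun j _ => ?_
        have harg : (fun p => ⟪ρ (g p) (v p), e i⟫) = fun p => ⟪v p, e i⟫ :=
          funext fun p => hinner_g (g p) (v p) i
        rw [harg, map_smul, map_smul, he_fix]
    · intro τ hτ v
      funext m
      rw [hform (fun i => v (τ⁻¹ i)) m, hform v (τ⁻¹ m)]
      congr 1
      refine Finset.sum_congr rfl fun ℓ _ => ?_
      refine Finset.sum_congr rfl fun i _ => ?_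
      refine Finset.sum_congr rfl fun j _ => ?_
      exact congrArg (fun t => a ℓ i j • (t • e j))
        (congrFun (hTmem ℓ τ hτ (fun p => ⟪v p, e i⟫)) m)


end WreathH
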